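/- arXiv:2106.13357 — 2 statements merged into one kernel-verified Lean document; each statement's English description precedes it below -/
import Mathlib

section
/- Every finite tree T admits an in-out-proper orientation D with |d_D^±(v)| ≤ 3 for all vertices v; i.e., the in-out-proper orientation number of any tree is at most 3. -/
/-- An orientation of a simple graph `G`: for each edge `{u,v}` exactly one of the
two directions is chosen. `dir u v = true` means the arc goes from `u` to `v`. -/
structure Orient {V : Type*} (G : SimpleGraph V) where
  dir : V → V → Bool
  consistent : ∀ u v, G.Adj u v → dir u v = !dir v u

variable {V : Type*}

/-- In-degree of `v` in the orientation `D`. -/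
def inDeg [Fintype V] (G : SimpleGraph V) [DecidableRel G.Adj] (D : Orient G) (v : V) : ℕ :=
  (Finset.univ.filter (fun u => G.Adj u v ∧ D.dir u v = true)).card

/-- Out-degree of `v` in the orientation `D`. -/
def outDeg [Fintype V] (G : SimpleGraph V) [DecidableRel G.Adj] (D : Orient G) (v : V) : ℕ :=
  (Finset.univ.filter (fun u => G.Adj u v ∧ D.dir v u = true)).card

/-- In-out-degree `d_D^±(v) = d_D^-(v) - d_D^+(v)`. -/
def ioDeg [Fintype V] (G : SimpleGraph V) [DecidableRel G.Adj] (D : Orient G) (v : V) : ℤ :=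
  (inDeg G D v : ℤ) - (outDeg G D v : ℤ)

/-- An orientation is in-out-proper if adjacent vertices have distinct in-out-degrees. -/
def IsIOProper [Fintype V] (G : SimpleGraph V) [DecidableRel G.Adj] (D : Orient G) : Prop :=
  ∀ u v, G.Adj u v → ioDeg G D u ≠ ioDeg G D v


open Finset SimpleGraph Walk
open scoped Classical
set_option linter.unusedSectionVars false

section TreeInfra
variable [Fintype V] {T : SimpleGraph V}

noncomputable def pth (hT : T.IsTree) (r v : V) : T.Walk v r :=
  (hT.existsUnique_path v r).exists.choose

lemma pth_isPath (hT : T.IsTree) (r v : V) : (pth hT r v).IsPath :=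
  (hT.existsUnique_path v r).exists.choose_spec

lemma pth_unique (hT : T.IsTree) (r v : V) (q : T.Walk v r) (hq : q.IsPath) :
    q = pth hT r v :=
  (hT.existsUnique_path v r).unique hq (pth_isPath hT r v)

noncomputable def par (hT : T.IsTree) (r v : V) : V :=
  if v = r then r else (pth hT r v).getVert 1

noncomputable def depth (hT : T.IsTree) (r v : V) : ℕ := (pth hT r v).length

lemma par_root (hT : T.IsTree) (r : V) : par hT r r = r := by simp [par]

lemma depth_root (hT : T.IsTree) (r : V) : depth hT r r = 0 := by
  have := pth_unique hT r r Walk.nil (by simp)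
  simp [depth, ← this]

lemma eq_root_of_depth_eq_zero (hT : T.IsTree) (r v : V) (h : depth hT r v = 0) : v = r :=
  Walk.eq_of_length_eq_zero h

lemma depth_lt_card (hT : T.IsTree) (r v : V) : depth hT r v < Fintype.card V :=
  (pth_isPath hT r v).length_lt

lemma par_eq_of_cons (hT : T.IsTree) (r v x : V) (h : T.Adj v x) (q : T.Walk x r)
    (hq : (Walk.cons h q).IsPath) : par hT r v = x := by
  have hco : Walk.cons h q = pth hT r v := pth_unique hT r v _ hq
  have hvr : v ≠ r := by
    rintro rfl
    have hnil := pth_unique hT v v Walk.nil (by simp)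
    rw [← hnil] at hco
    simp at hco
  rw [par, if_neg hvr, ← hco]
  simp [Walk.getVert_cons_succ]

lemma par_step (hT : T.IsTree) (r v : V) (hv : v ≠ r) :
    T.Adj v (par hT r v) ∧ depth hT r (par hT r v) + 1 = depth hT r v := by
  obtain ⟨w, h, q, hq⟩ := Walk.exists_eq_cons_of_ne hv (pth hT r v)
  have hp : (Walk.cons h q).IsPath := by rw [← hq]; exact pth_isPath hT r v
  have hqp : q.IsPath := hp.of_cons
  have hqe : q = pth hT r w := pth_unique hT r w q hqp
  have hpw : par hT r v = w := par_eq_of_cons hT r v w h q hp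
  refine ⟨by rwa [hpw], ?_⟩
  rw [hpw, depth, depth, ← hqe, hq]
  simp

lemma adj_par (hT : T.IsTree) (r v : V) (hv : v ≠ r) : T.Adj v (par hT r v) :=
  (par_step hT r v hv).1

lemma depth_par (hT : T.IsTree) (r v : V) (hv : v ≠ r) :
    depth hT r (par hT r v) + 1 = depth hT r v := (par_step hT r v hv).2

lemma ne_root_of_par_eq (hT : T.IsTree) (r u w : V) (h : T.Adj u w) (hp : par hT r u = w) :
    u ≠ r := by
  rintro rfl
  rw [par_root] at hp
  subst hp
  exact T.irrefl h

lemma par_dichotomy (hT : T.IsTree) (r u w : V) (h : T.Adj u w) :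
    par hT r u = w ∨ par hT r w = u := by
  by_cases hc : par hT r u = w
  · exact Or.inl hc
  · right
    have hw : w ∉ (pth hT r u).support := by
      intro hmem
      have h1 : ((pth hT r u).takeUntil w hmem).IsPath := (pth_isPath hT r u).takeUntil hmem
      have h2 : (Walk.cons h Walk.nil : T.Walk u w).IsPath := by
        simp [Walk.cons_isPath_iff, h.ne]
      have h3 : (pth hT r u).takeUntil w hmem = Walk.cons h Walk.nil :=
        (hT.existsUnique_path u w).unique h1 h2
      have h4 := Walk.take_spec (pth hT r u) hmem
      rw [h3] at h4
      rw [Walk.cons_append, Walk.nil_append] at h4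
      have h5 : ((Walk.cons h ((pth hT r u).dropUntil w hmem)) : T.Walk u r).IsPath := by
        rw [h4]; exact pth_isPath hT r u
      exact hc (par_eq_of_cons hT r u w h _ h5)
    exact par_eq_of_cons hT r w u h.symm (pth hT r u)
      (by rw [Walk.cons_isPath_iff]; exact ⟨pth_isPath hT r u, hw⟩)

lemma not_both_par (hT : T.IsTree) (r u w : V) (h : T.Adj u w) :
    ¬ (par hT r u = w ∧ par hT r w = u) := by
  rintro ⟨h1, h2⟩
  have hu : u ≠ r := ne_root_of_par_eq hT r u w h h1
  have hw : w ≠ r := ne_root_of_par_eq hT r w u h.symm h2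
  have d1 := depth_par hT r u hu
  have d2 := depth_par hT r w hw
  rw [h1] at d1; rw [h2] at d2
  omega
end TreeInfra
section AncInfra
variable [Fintype V] {T : SimpleGraph V}

def anc (hT : T.IsTree) (r v w : V) : Prop := ∃ k, (par hT r)^[k] w = v

lemma anc_refl (hT : T.IsTree) (r v : V) : anc hT r v v := ⟨0, rfl⟩

lemma par_iterate_root (hT : T.IsTree) (r : V) (k : ℕ) : (par hT r)^[k] r = r :=
  Function.iterate_fixed (par_root hT r) k

lemma iter_depth_eq_root (hT : T.IsTree) (r : V) :
    ∀ n v, depth hT r v = n → (par hT r)^[n] v = r := by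
  intro n
  induction n with
  | zero => intro v hv; exact eq_root_of_depth_eq_zero hT r v hv
  | succ n ih =>
    intro v hv
    have hvr : v ≠ r := by
      intro h; rw [h, depth_root] at hv; omega
    rw [Function.iterate_succ_apply]
    exact ih _ (by have := depth_par hT r v hvr; omega)

lemma anc_root (hT : T.IsTree) (r w : V) : anc hT r r w :=
  ⟨depth hT r w, iter_depth_eq_root hT r _ w rfl⟩

lemma iter_depth (hT : T.IsTree) (r : V) :
    ∀ k v, k ≤ depth hT r v → depth hT r ((par hT r)^[k] v) + k = depth hT r v := by
  intro k
  induction k with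
  | zero => intro v _; simp
  | succ k ih =>
    intro v hk
    have hvr : v ≠ r := by
      intro h; rw [h, depth_root] at hk; omega
    have hd := depth_par hT r v hvr
    rw [Function.iterate_succ_apply]
    have := ih (par hT r v) (by omega)
    omega

lemma anc_k_le (hT : T.IsTree) (r v w : V) (k : ℕ) (hk : (par hT r)^[k] w = v)
    (hvr : v ≠ r) : k ≤ depth hT r w ∧ depth hT r v + k = depth hT r w := by
  by_cases h : k ≤ depth hT r w
  · exact ⟨h, by have := iter_depth hT r k w h; rw [hk] at this; omega⟩
  · exfalso
    apply hvr
    rw [← hk, show k = (k - depth hT r w) + depth hT r w by omega,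
      Function.iterate_add_apply, iter_depth_eq_root hT r _ w rfl, par_iterate_root]

lemma anc_depth_le (hT : T.IsTree) (r v w : V) (h : anc hT r v w) :
    depth hT r v ≤ depth hT r w := by
  obtain ⟨k, hk⟩ := h
  by_cases hvr : v = r
  · rw [hvr, depth_root]; omega
  · have := anc_k_le hT r v w k hk hvr; omega

lemma anc_trans_par (hT : T.IsTree) (r v c w : V) (hc : par hT r c = v)
    (h : anc hT r c w) : anc hT r v w := by
  obtain ⟨k, hk⟩ := h
  exact ⟨k + 1, by rw [Function.iterate_succ_apply', hk, hc]⟩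

lemma anc_extend (hT : T.IsTree) (r c w x : V) (h : anc hT r c w) (hx : par hT r x = w) :
    anc hT r c x := by
  obtain ⟨k, hk⟩ := h
  exact ⟨k + 1, by rw [Function.iterate_succ_apply, hx, hk]⟩

lemma anc_par_mid (hT : T.IsTree) (r c w : V) (h : anc hT r c w) (hwc : w ≠ c) :
    anc hT r c (par hT r w) := by
  obtain ⟨k, hk⟩ := h
  match k, hk with
  | 0, hk => exact absurd hk hwc
  | k + 1, hk => exact ⟨k, by rw [← Function.iterate_succ_apply, hk]⟩

lemma anc_decompose (hT : T.IsTree) (r v w : V) (h : anc hT r v w) (hwv : w ≠ v) :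
    ∃ c, c ≠ r ∧ par hT r c = v ∧ anc hT r c w := by
  obtain ⟨k, hk⟩ := h
  induction k using Nat.strong_induction_on generalizing w with
  | _ k ih =>
    match k, hk with
    | 0, hk => exact absurd hk hwv
    | k + 1, hk =>
      rw [Function.iterate_succ_apply'] at hk
      by_cases hcr : (par hT r)^[k] w = r
      · have hvr : v = r := by rw [hcr, par_root] at hk; exact hk.symm
        exact ih k (by omega) w hwv (by rw [hcr, hvr])
      · exact ⟨(par hT r)^[k] w, hcr, hk, ⟨k, rfl⟩⟩

lemma toward_eq (hT : T.IsTree) (r v c w : V) (hc : par hT r c = v) (hcr : c ≠ r)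
    (h : anc hT r c w) : (par hT r)^[depth hT r w - depth hT r v - 1] w = c := by
  obtain ⟨k, hk⟩ := h
  have h1 := anc_k_le hT r c w k hk hcr
  have h2 : depth hT r v + 1 = depth hT r c := by
    have := depth_par hT r c hcr; rw [hc] at this; omega
  have : depth hT r w - depth hT r v - 1 = k := by omega
  rw [this, hk]
end AncInfra
section OrientInfra
variable [Fintype V] {T : SimpleGraph V} [DecidableRel T.Adj]

noncomputable def childs (hT : T.IsTree) (r v : V) : Finset V :=
  Finset.univ.filter (fun c => c ≠ r ∧ par hT r c = v)

lemma mem_childs (hT : T.IsTree) (r v c : V) :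
    c ∈ childs hT r v ↔ c ≠ r ∧ par hT r c = v := by
  simp [childs]

lemma adj_of_child (hT : T.IsTree) (r v c : V) (h : c ∈ childs hT r v) : T.Adj c v := by
  rw [mem_childs] at h
  have := adj_par hT r c h.1
  rwa [h.2] at this

noncomputable def valAt (hT : T.IsTree) (r : V) (g : V → Bool) (v : V) : ℤ :=
  (if v = r then 0 else if g v then -1 else 1) +
    ∑ c ∈ childs hT r v, (if g c then (1 : ℤ) else -1)

lemma valAt_congr (hT : T.IsTree) (r : V) (g g' : V → Bool) (v : V)
    (h1 : g v = g' v) (h2 : ∀ c ∈ childs hT r v, g c = g' c) :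
    valAt hT r g v = valAt hT r g' v := by
  unfold valAt
  rw [h1]
  congr 1
  exact Finset.sum_congr rfl (fun c hc => by rw [h2 c hc])

lemma valAt_leaf (hT : T.IsTree) (r : V) (g : V → Bool) (v : V) (hv : v ≠ r)
    (h : childs hT r v = ∅) : valAt hT r g v = if g v then -1 else 1 := by
  unfold valAt
  rw [h, if_neg hv]
  simp

noncomputable def orientOf (hT : T.IsTree) (r : V) (g : V → Bool) : Orient T where
  dir := fun a b =>
    if par hT r a = b ∧ a ≠ r then g a
    else if par hT r b = a ∧ b ≠ r then !(g b) else true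
  consistent := by
    intro u v huv
    rcases par_dichotomy hT r u v huv with h | h
    · have hur : u ≠ r := ne_root_of_par_eq hT r u v huv h
      have hnot : ¬ (par hT r v = u ∧ v ≠ r) := by
        rintro ⟨h1, h2⟩
        exact not_both_par hT r u v huv ⟨h, h1⟩
      rw [if_pos ⟨h, hur⟩, if_neg hnot, if_pos ⟨h, hur⟩]
      simp
    · have hvr : v ≠ r := ne_root_of_par_eq hT r v u huv.symm h
      have hnot : ¬ (par hT r u = v ∧ u ≠ r) := by
        rintro ⟨h1, h2⟩
        exact not_both_par hT r u v huv ⟨h1, h⟩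
      rw [if_neg hnot, if_pos ⟨h, hvr⟩, if_pos ⟨h, hvr⟩]

lemma sum_pm (s : Finset V) (P : V → Bool) :
    ∑ x ∈ s, (if P x then (1:ℤ) else -1) =
      2 * (s.filter (fun x => P x = true)).card - s.card := by
  rw [Finset.sum_ite]
  simp only [Finset.sum_const, nsmul_eq_mul, mul_one, mul_neg_one]
  have := Finset.card_filter_add_card_filter_not (s := s) (p := fun x => P x = true)
  push_cast
  push_cast at this
  omega

lemma ioDeg_eq_sum (D : Orient T) (v : V) :
    ioDeg T D v = ∑ u ∈ T.neighborFinset v, (if D.dir u v then (1:ℤ) else -1) := by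
  classical
  have h1 : inDeg T D v
      = ((T.neighborFinset v).filter (fun u => D.dir u v = true)).card := by
    unfold inDeg
    congr 1
    ext u
    simp only [Finset.mem_filter, Finset.mem_univ, true_and, SimpleGraph.mem_neighborFinset]
    rw [adj_comm]
  have h2 : outDeg T D v
      = ((T.neighborFinset v).filter (fun u => ¬ (D.dir u v = true))).card := by
    unfold outDeg
    congr 1
    ext u
    simp only [Finset.mem_filter, Finset.mem_univ, true_and, SimpleGraph.mem_neighborFinset]
    constructor
    · rintro ⟨ha, hd⟩
      refine ⟨ha.symm, ?_⟩
      rw [D.consistent u v ha, hd]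
      simp
    · rintro ⟨ha, hd⟩
      refine ⟨ha.symm, ?_⟩
      have hc := D.consistent v u ha
      rw [Bool.not_eq_true] at hd
      rw [hc, hd]
      simp
  have h3 := Finset.card_filter_add_card_filter_not
    (s := T.neighborFinset v) (p := fun u => D.dir u v = true)
  rw [ioDeg, h1, h2, sum_pm]
  have h4 : ((T.neighborFinset v).filter (fun u => (fun u => D.dir u v) u = true)).card
      = ((T.neighborFinset v).filter (fun u => D.dir u v = true)).card := rfl
  push_cast
  omega

lemma nbr_eq (hT : T.IsTree) (r v : V) :
    T.neighborFinset v
      = childs hT r v ∪ (if v = r then (∅ : Finset V) else {par hT r v}) := by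
  ext u
  rw [SimpleGraph.mem_neighborFinset, Finset.mem_union, mem_childs]
  constructor
  · intro h
    rcases par_dichotomy hT r u v h.symm with hp | hp
    · exact Or.inl ⟨ne_root_of_par_eq hT r u v h.symm hp, hp⟩
    · have hvr : v ≠ r := ne_root_of_par_eq hT r v u h hp
      right
      rw [if_neg hvr]
      simp [hp.symm]
  · rintro (⟨h1, h2⟩ | h)
    · have := adj_par hT r u h1
      rw [h2] at this
      exact this.symm
    · by_cases hvr : v = r
      · rw [if_pos hvr] at h; simp at h
      · rw [if_neg hvr] at h
        simp at h
        rw [h]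
        exact adj_par hT r v hvr

lemma ioDeg_orientOf (hT : T.IsTree) (r : V) (g : V → Bool) (v : V) :
    ioDeg T (orientOf hT r g) v = valAt hT r g v := by
  rw [ioDeg_eq_sum, nbr_eq hT r v]
  have hdisj : Disjoint (childs hT r v) (if v = r then (∅ : Finset V) else {par hT r v}) := by
    by_cases hvr : v = r
    · rw [if_pos hvr]; simp
    · rw [if_neg hvr]
      simp only [Finset.disjoint_singleton_right, mem_childs]
      rintro ⟨h1, h2⟩
      exact not_both_par hT r v (par hT r v) (adj_par hT r v hvr) ⟨rfl, h2⟩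
  have hc : (∑ x ∈ childs hT r v, if (orientOf hT r g).dir x v = true then (1:ℤ) else -1)
      = ∑ c ∈ childs hT r v, (if g c then (1:ℤ) else -1) := by
    apply Finset.sum_congr rfl
    intro c hc
    rw [mem_childs] at hc
    have hd : (orientOf hT r g).dir c v = g c := by
      show (if par hT r c = v ∧ c ≠ r then g c
        else if par hT r v = c ∧ v ≠ r then !(g v) else true) = g c
      rw [if_pos ⟨hc.2, hc.1⟩]
    rw [hd]
  have hp : (∑ x ∈ (if v = r then (∅ : Finset V) else {par hT r v}),
        if (orientOf hT r g).dir x v = true then (1:ℤ) else -1)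
      = (if v = r then 0 else if g v then -1 else 1) := by
    by_cases hvr : v = r
    · rw [if_pos hvr, if_pos hvr]
      simp
    · rw [if_neg hvr, if_neg hvr, Finset.sum_singleton]
      have hnot : ¬ (par hT r (par hT r v) = v ∧ par hT r v ≠ r) := by
        rintro ⟨h1, h2⟩
        exact not_both_par hT r v (par hT r v) (adj_par hT r v hvr) ⟨rfl, h1⟩
      have hd : (orientOf hT r g).dir (par hT r v) v = !(g v) := by
        show (if par hT r (par hT r v) = v ∧ par hT r v ≠ r then g (par hT r v)
          else if par hT r v = par hT r v ∧ v ≠ r then !(g v) else true) = !(g v)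
        rw [if_neg hnot, if_pos ⟨rfl, hvr⟩]
      rw [hd]
      cases g v <;> simp
  rw [Finset.sum_union hdisj, hc, hp]
  unfold valAt
  ring
end OrientInfra
section Arith

lemma Lside (p forb : ℤ) (hp : p = 1 ∨ p = -1) (f m : ℕ) (h1 : 1 ≤ f + m) :
    ∃ (t : ℤ) (a b : ℕ), a ≤ f ∧ b ≤ m ∧ t = p + 2*a - f + 2*b - m ∧
      -3 ≤ t ∧ t ≤ 3 ∧ t ≠ forb ∧ (1 ≤ a → t ≠ -1) ∧ (a < f → t ≠ 1) := by
  have key : ∃ (t₁ t₂ : ℤ) (a₁ b₁ a₂ b₂ : ℕ), t₁ ≠ t₂ ∧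
      (a₁ ≤ f ∧ b₁ ≤ m ∧ t₁ = p + 2*a₁ - f + 2*b₁ - m ∧ -3 ≤ t₁ ∧ t₁ ≤ 3 ∧
        (1 ≤ a₁ → t₁ ≠ -1) ∧ (a₁ < f → t₁ ≠ 1)) ∧
      (a₂ ≤ f ∧ b₂ ≤ m ∧ t₂ = p + 2*a₂ - f + 2*b₂ - m ∧ -3 ≤ t₂ ∧ t₂ ≤ 3 ∧
        (1 ≤ a₂ → t₂ ≠ -1) ∧ (a₂ < f → t₂ ≠ 1)) := by
    rcases hp with rfl | rfl
    · rcases Nat.even_or_odd (f + m) with he | ho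
      · by_cases h2 : f + m = 2
        · -- t₁ = -1 (a=0,b=0), t₂ = 3 (a=f,b=m)
          exact ⟨-1, 3, 0, 0, f, m, by omega, by constructor <;> omega,
            by refine ⟨le_refl f, le_refl m, ?_, ?_, ?_, ?_, ?_⟩ <;> omega⟩
        · -- f+m even ≥ 4 : t = -3 with S=(f+m-4)/2 ; t = 3 with S=(f+m+2)/2
          have heq : (f + m) % 2 = 0 := Nat.even_iff.mp he
          have h4 : 4 ≤ f + m := by omega
          refine ⟨-3, 3, min f ((f+m-4)/2), (f+m-4)/2 - min f ((f+m-4)/2),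
            min f ((f+m+2)/2), (f+m+2)/2 - min f ((f+m+2)/2), by omega, ?_, ?_⟩ <;>
            (refine ⟨?_, ?_, ?_, ?_, ?_, ?_, ?_⟩ <;> omega)
      · -- f+m odd : t₁ = 0 with S=(f+m-1)/2, t₂ = 2 with S=(f+m+1)/2
        have hodd : (f + m) % 2 = 1 := Nat.odd_iff.mp ho
        refine ⟨0, 2, min f ((f+m-1)/2), (f+m-1)/2 - min f ((f+m-1)/2),
          min f ((f+m+1)/2), (f+m+1)/2 - min f ((f+m+1)/2), by omega, ?_, ?_⟩ <;>
          (refine ⟨?_, ?_, ?_, ?_, ?_, ?_, ?_⟩ <;> omega)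
    · rcases Nat.even_or_odd (f + m) with he | ho
      · by_cases h2 : f + m = 2
        · -- t₁ = 1 (a=f,b=m), t₂ = -3 (a=0,b=0)
          exact ⟨1, -3, f, m, 0, 0, by omega,
            by refine ⟨le_refl f, le_refl m, ?_, ?_, ?_, ?_, ?_⟩ <;> omega,
            by constructor <;> omega⟩
        · have heq : (f + m) % 2 = 0 := Nat.even_iff.mp he
          have h4 : 4 ≤ f + m := by omega
          refine ⟨-3, 3, min f ((f+m-2)/2), (f+m-2)/2 - min f ((f+m-2)/2),
            min f ((f+m+4)/2), (f+m+4)/2 - min f ((f+m+4)/2), by omega, ?_, ?_⟩ <;>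
            (refine ⟨?_, ?_, ?_, ?_, ?_, ?_, ?_⟩ <;> omega)
      · have hodd : (f + m) % 2 = 1 := Nat.odd_iff.mp ho
        refine ⟨0, -2, min f ((f+m+1)/2), (f+m+1)/2 - min f ((f+m+1)/2),
          min f ((f+m-1)/2), (f+m-1)/2 - min f ((f+m-1)/2), by omega, ?_, ?_⟩ <;>
          (refine ⟨?_, ?_, ?_, ?_, ?_, ?_, ?_⟩ <;> omega)
  obtain ⟨t₁, t₂, a₁, b₁, a₂, b₂, hne, w₁, w₂⟩ := key
  by_cases hf : t₁ = forb
  · exact ⟨t₂, a₂, b₂, w₂.1, w₂.2.1, w₂.2.2.1, w₂.2.2.2.1, w₂.2.2.2.2.1,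
      by rw [← hf]; exact hne.symm, w₂.2.2.2.2.2.1, w₂.2.2.2.2.2.2⟩
  · exact ⟨t₁, a₁, b₁, w₁.1, w₁.2.1, w₁.2.2.1, w₁.2.2.2.1, w₁.2.2.2.2.1, hf,
      w₁.2.2.2.2.2.1, w₁.2.2.2.2.2.2⟩

lemma Lroot (f m : ℕ) :
    ∃ (t : ℤ) (a b : ℕ), a ≤ f ∧ b ≤ m ∧ t = 2*a - f + 2*b - m ∧
      -3 ≤ t ∧ t ≤ 3 ∧ (1 ≤ a → t ≠ -1) ∧ (a < f → t ≠ 1) := by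
  rcases Nat.even_or_odd (f + m) with he | ho
  · have h2 : (f + m) % 2 = 0 := Nat.even_iff.mp he
    refine ⟨0, min f ((f+m)/2), (f+m)/2 - min f ((f+m)/2), ?_, ?_, ?_, ?_, ?_, ?_, ?_⟩ <;> omega
  · have hodd : (f + m) % 2 = 1 := Nat.odd_iff.mp ho
    by_cases hfm : f ≤ m + 1
    · refine ⟨-1, 0, (f+m-1)/2, ?_, ?_, ?_, ?_, ?_, ?_, ?_⟩ <;> omega
    · refine ⟨3, min f ((3+f+m)/2), (3+f+m)/2 - min f ((3+f+m)/2),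
        ?_, ?_, ?_, ?_, ?_, ?_, ?_⟩ <;> omega

end Arith
section MainInd
variable [Fintype V] {T : SimpleGraph V} [DecidableRel T.Adj]

lemma main_ind (hT : T.IsTree) (r : V) :
    ∀ n v, Fintype.card V ≤ depth hT r v + n → ∀ (pd : Bool) (forb : ℤ),
    ∃ g : V → Bool, g v = pd ∧
      (∀ w, anc hT r v w → -3 ≤ valAt hT r g w ∧ valAt hT r g w ≤ 3) ∧
      (∀ u w, anc hT r v u → anc hT r v w → T.Adj u w →
        valAt hT r g u ≠ valAt hT r g w) ∧
      (v ≠ r → (childs hT r v).Nonempty → valAt hT r g v ≠ forb) := by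
  intro n
  induction n with
  | zero =>
    intro v hn
    exact absurd hn (by have := depth_lt_card hT r v; omega)
  | succ n IH =>
    intro v hn pd forb
    by_cases hCs : childs hT r v = ∅
    · refine ⟨fun x => if x = v then pd else false, by simp, ?_, ?_, ?_⟩
      · intro w hw
        have hwv : w = v := by
          by_contra hne
          obtain ⟨c, hcr, hcp, _⟩ := anc_decompose hT r v w hw hne
          have : c ∈ childs hT r v := (mem_childs hT r v c).mpr ⟨hcr, hcp⟩
          rw [hCs] at this; simp at this
        subst hwv
        unfold valAt
        rw [hCs]
        simp only [Finset.sum_empty, add_zero]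
        split_ifs <;> omega
      · intro u w hu hw hadj
        have hu' : u = v := by
          by_contra hne
          obtain ⟨c, hcr, hcp, _⟩ := anc_decompose hT r v u hu hne
          have : c ∈ childs hT r v := (mem_childs hT r v c).mpr ⟨hcr, hcp⟩
          rw [hCs] at this; simp at this
        have hw' : w = v := by
          by_contra hne
          obtain ⟨c, hcr, hcp, _⟩ := anc_decompose hT r v w hw hne
          have : c ∈ childs hT r v := (mem_childs hT r v c).mpr ⟨hcr, hcp⟩
          rw [hCs] at this; simp at this
        rw [hu', hw'] at hadj
        exact absurd hadj (T.irrefl)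
      · intro _ hne
        rw [hCs] at hne
        exact absurd hne Finset.not_nonempty_empty
    · have hCne : (childs hT r v).Nonempty := Finset.nonempty_iff_ne_empty.mpr hCs
      set Fl := (childs hT r v).filter (fun c => childs hT r c = ∅) with hFl
      set Fm := (childs hT r v).filter (fun c => ¬ childs hT r c = ∅) with hFm
      have hcard : Fl.card + Fm.card = (childs hT r v).card :=
        Finset.card_filter_add_card_filter_not _
      have hge1 : 1 ≤ Fl.card + Fm.card := by
        rw [hcard]; exact Finset.card_pos.mpr hCne
      have hL : ∃ (t : ℤ) (a b : ℕ), a ≤ Fl.card ∧ b ≤ Fm.card ∧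
          t = (if v = r then 0 else if pd then -1 else 1) + 2*a - Fl.card + 2*b - Fm.card ∧
          -3 ≤ t ∧ t ≤ 3 ∧ (v ≠ r → t ≠ forb) ∧ (1 ≤ a → t ≠ -1) ∧
          (a < Fl.card → t ≠ 1) := by
        by_cases hvr : v = r
        · obtain ⟨t, a, b, h1, h2, h3, h4, h5, h6, h7⟩ := Lroot Fl.card Fm.card
          exact ⟨t, a, b, h1, h2, by rw [if_pos hvr]; omega, h4, h5,
            fun hv => absurd hvr hv, h6, h7⟩
        · obtain ⟨t, a, b, h1, h2, h3, h4, h5, h6, h7, h8⟩ :=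
            Lside (if pd then -1 else 1) forb (by cases pd <;> simp) Fl.card Fm.card hge1
          exact ⟨t, a, b, h1, h2, by rw [if_neg hvr]; omega, h4, h5, fun _ => h6, h7, h8⟩
      obtain ⟨t, a, b, ha, hb, ht, ht1, ht2, htf, hta, htb⟩ := hL
      obtain ⟨A, hA, hAcard⟩ := Finset.exists_subset_card_eq (s := Fl) ha
      obtain ⟨B, hB, hBcard⟩ := Finset.exists_subset_card_eq (s := Fm) hb
      set s : V → Bool := fun c => decide (c ∈ A ∪ B) with hs
      have hch : ∀ c : V, ∃ gc : V → Bool, c ∈ childs hT r v →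
          (gc c = s c ∧
           (∀ w, anc hT r c w → -3 ≤ valAt hT r gc w ∧ valAt hT r gc w ≤ 3) ∧
           (∀ u w, anc hT r c u → anc hT r c w → T.Adj u w →
             valAt hT r gc u ≠ valAt hT r gc w) ∧
           (c ≠ r → (childs hT r c).Nonempty → valAt hT r gc c ≠ t)) := by
        intro c
        by_cases hc : c ∈ childs hT r v
        · have hcm := (mem_childs hT r v c).mp hc
          have hdc : depth hT r c = depth hT r v + 1 := by
            have := depth_par hT r c hcm.1; rw [hcm.2] at this; omega
          obtain ⟨gc, h1, h2, h3, h4⟩ := IH c (by omega) (s c) t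
          exact ⟨gc, fun _ => ⟨h1, h2, h3, h4⟩⟩
        · exact ⟨fun _ => false, fun h => absurd h hc⟩
      choose G hG using hch
      set g : V → Bool := fun w =>
        if w = v then pd
        else if (anc hT r v w ∧ w ≠ v) then
          G ((par hT r)^[depth hT r w - depth hT r v - 1] w) w
        else false with hgdef
      have hgv : g v = pd := by rw [hgdef]; simp
      have hagree : ∀ c ∈ childs hT r v, ∀ w, anc hT r c w → g w = G c w := by
        intro c hc w hw
        have hcm := (mem_childs hT r v c).mp hc
        have hdc : depth hT r c = depth hT r v + 1 := by
          have := depth_par hT r c hcm.1; rw [hcm.2] at this; omega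
        have hwv : w ≠ v := by
          intro h
          have := anc_depth_le hT r c w hw
          rw [h] at this
          omega
        have hanc : anc hT r v w := anc_trans_par hT r v c w hcm.2 hw
        rw [hgdef]
        dsimp only
        rw [if_neg hwv, if_pos ⟨hanc, hwv⟩, toward_eq hT r v c w hcm.2 hcm.1 hw]
      have hgc : ∀ c ∈ childs hT r v, g c = s c := fun c hc =>
        (hagree c hc c (anc_refl hT r c)).trans ((hG c hc).1)
      have htrans : ∀ c ∈ childs hT r v, ∀ w, anc hT r c w →
          valAt hT r g w = valAt hT r (G c) w := by
        intro c hc w hw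
        apply valAt_congr
        · exact hagree c hc w hw
        · intro x hx
          have hxm := (mem_childs hT r w x).mp hx
          exact hagree c hc x (anc_extend hT r c w x hw hxm.2)
      have hAB : A ∪ B ⊆ childs hT r v :=
        Finset.union_subset (hA.trans (Finset.filter_subset _ _))
          (hB.trans (Finset.filter_subset _ _))
      have hABdisj : Disjoint A B := by
        rw [Finset.disjoint_left]
        intro x hxA hxB
        have h1 := hA hxA
        have h2 := hB hxB
        rw [hFl] at h1
        rw [hFm] at h2
        exact (Finset.mem_filter.mp h2).2 (Finset.mem_filter.mp h1).2
      have hABcard : (A ∪ B).card = a + b := by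
        rw [Finset.card_union_of_disjoint hABdisj, hAcard, hBcard]
      have hvalv : valAt hT r g v = t := by
        unfold valAt
        have hsum : ∑ c ∈ childs hT r v, (if g c then (1:ℤ) else -1)
            = ∑ c ∈ childs hT r v, (if s c then (1:ℤ) else -1) :=
          Finset.sum_congr rfl (fun c hc => by rw [hgc c hc])
        rw [hsum, sum_pm]
        have hfilter : (childs hT r v).filter (fun c => s c = true) = A ∪ B := by
          rw [hs]
          simp only [decide_eq_true_eq]
          rw [Finset.filter_mem_eq_inter, Finset.inter_eq_right.mpr hAB]
        rw [hfilter, hABcard, ← hcard, hgv, ht]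
        push_cast
        ring
      refine ⟨g, hgv, ?_, ?_, ?_⟩
      · intro w hw
        by_cases hwv : w = v
        · rw [hwv, hvalv]; exact ⟨ht1, ht2⟩
        · obtain ⟨c, hcr, hcp, hcw⟩ := anc_decompose hT r v w hw hwv
          have hc : c ∈ childs hT r v := (mem_childs hT r v c).mpr ⟨hcr, hcp⟩
          rw [htrans c hc w hcw]
          exact (hG c hc).2.1 w hcw
      · have key : ∀ u w, anc hT r v u → anc hT r v w → T.Adj u w → par hT r w = u →
            valAt hT r g u ≠ valAt hT r g w := by
          intro u w hu hw hadj hpw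
          have hwr : w ≠ r := ne_root_of_par_eq hT r w u hadj.symm hpw
          by_cases huv : u = v
          · have hwc : w ∈ childs hT r v :=
              (mem_childs hT r v w).mpr ⟨hwr, by rw [hpw, huv]⟩
            rw [huv, hvalv]
            by_cases hleaf : childs hT r w = ∅
            · have hvw : valAt hT r g w = if g w then -1 else 1 :=
                valAt_leaf hT r g w hwr hleaf
              rw [hvw, hgc w hwc]
              by_cases hsw : s w = true
              · rw [if_pos hsw]
                have hw' : w ∈ A := by
                  rw [hs] at hsw
                  simp only [decide_eq_true_eq, Finset.mem_union] at hsw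
                  rcases hsw with h' | h'
                  · exact h'
                  · exfalso
                    have := hB h'
                    rw [hFm] at this
                    exact (Finset.mem_filter.mp this).2 hleaf
                exact hta (by have := Finset.card_pos.mpr ⟨w, hw'⟩; omega)
              · rw [if_neg hsw]
                have hwFl : w ∈ Fl := by
                  rw [hFl]; exact Finset.mem_filter.mpr ⟨hwc, hleaf⟩
                have hnotA : w ∉ A := by
                  intro h'
                  apply hsw
                  rw [hs]
                  simp only [decide_eq_true_eq, Finset.mem_union]
                  exact Or.inl h'
                have hlt : a < Fl.card := by
                  rw [← hAcard]
                  exact Finset.card_lt_card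
                    ((Finset.ssubset_iff_of_subset hA).mpr ⟨w, hwFl, hnotA⟩)
                exact htb hlt
            · rw [htrans w hwc w (anc_refl hT r w)]
              exact ((hG w hwc).2.2.2 hwr (Finset.nonempty_iff_ne_empty.mpr hleaf)).symm
          · have hwv : w ≠ v := by
              intro he
              rw [he] at hwr hpw
              have hd1 := anc_depth_le hT r v u hu
              have hd2 := depth_par hT r v hwr
              rw [hpw] at hd2
              omega
            obtain ⟨c, hcr, hcp, hcw⟩ := anc_decompose hT r v w hw hwv
            have hc : c ∈ childs hT r v := (mem_childs hT r v c).mpr ⟨hcr, hcp⟩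
            have hwc2 : w ≠ c := by
              intro he
              rw [he] at hpw
              exact huv (hpw.symm.trans hcp)
            have hcu : anc hT r c u := by
              have := anc_par_mid hT r c w hcw hwc2
              rwa [hpw] at this
            rw [htrans c hc u hcu, htrans c hc w hcw]
            exact (hG c hc).2.2.1 u w hcu hcw hadj
        intro u w hu hw hadj
        rcases par_dichotomy hT r u w hadj with h | h
        · exact (key w u hw hu hadj.symm h).symm
        · exact key u w hu hw hadj h
      · intro hvr _
        rw [hvalv]
        exact htf hvr
end MainInd


/-- Every finite tree admits an in-out-proper orientation with all absolute
in-out-degrees at most `3`; i.e. `χ↔(T) ≤ 3`. -/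
theorem stmt_9 [Fintype V] (T : SimpleGraph V) [DecidableRel T.Adj] (hT : T.IsTree) :
    ∃ D : Orient T, IsIOProper T D ∧ ∀ v, |ioDeg T D v| ≤ 3 := by
  classical
  have hne : Nonempty V := hT.isConnected.nonempty
  obtain ⟨r⟩ := hne
  obtain ⟨g, hg1, hg2, hg3, hg4⟩ :=
    main_ind hT r (Fintype.card V) r (Nat.le_add_left _ _) true 0
  refine ⟨orientOf hT r g, ?_, ?_⟩
  · intro u v hadj
    rw [ioDeg_orientOf, ioDeg_orientOf]
    exact hg3 u v (anc_root hT r u) (anc_root hT r v) hadj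
  · intro v
    rw [ioDeg_orientOf]
    have h := hg2 v (anc_root hT r v)
    rw [abs_le]
    exact h
end

section
/- Let G be a cubic (3-regular) finite simple graph and H its line graph. If H admits an in-out-proper orientation with all absolute in-out-degrees at most 2, then G admits a proper edge coloring with 3 colors. -/
variable {V : Type*}

open SimpleGraph in
lemma inDeg_add_outDeg [Fintype V] (G : SimpleGraph V) [DecidableRel G.Adj]
    (D : Orient G) (v : V) : inDeg G D v + outDeg G D v = G.degree v := by
  classical
  unfold inDeg outDeg
  rw [← Finset.card_union_of_disjoint]
  · have hunion : (Finset.univ.filter (fun u => G.Adj u v ∧ D.dir u v = true)) ∪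
        (Finset.univ.filter (fun u => G.Adj u v ∧ D.dir v u = true)) = G.neighborFinset v := by
      ext u
      simp only [Finset.mem_union, Finset.mem_filter, Finset.mem_univ, true_and,
        SimpleGraph.mem_neighborFinset]
      constructor
      · rintro (⟨h, _⟩ | ⟨h, _⟩) <;> exact h.symm
      · intro h
        have h' : G.Adj u v := h.symm
        have hc := D.consistent u v h'
        cases hu : D.dir u v with
        | true => exact Or.inl ⟨h', rfl⟩
        | false =>
          rw [hu] at hc
          exact Or.inr ⟨h', by simpa using hc.symm⟩
    rw [hunion, SimpleGraph.degree]
  · rw [Finset.disjoint_left]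
    intro u h1 h2
    simp only [Finset.mem_filter, Finset.mem_univ, true_and] at h1 h2
    have hc := D.consistent u v h1.1
    rw [h1.2, h2.2] at hc
    simp at hc

open SimpleGraph in
lemma lineGraph_deg [Fintype V] [DecidableEq V] (G : SimpleGraph V) [DecidableRel G.Adj]
    [DecidableRel G.lineGraph.Adj] (hcubic : ∀ v, G.degree v = 3) (e : G.edgeSet) :
    G.lineGraph.degree e = 4 := by
  classical
  obtain ⟨e, he⟩ := e
  induction e with
  | _ u v =>
  have huv : G.Adj u v := he
  have hdeg : G.lineGraph.degree ⟨s(u,v), he⟩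
      = ((G.lineGraph.neighborFinset ⟨s(u,v), he⟩).image Subtype.val).card := by
    rw [Finset.card_image_of_injective _ Subtype.val_injective, SimpleGraph.degree]
  rw [hdeg]
  have himg : (G.lineGraph.neighborFinset ⟨s(u,v), he⟩).image Subtype.val
      = (G.incidenceFinset u ∪ G.incidenceFinset v).erase s(u,v) := by
    ext a
    simp only [Finset.mem_image, SimpleGraph.mem_neighborFinset, Finset.mem_erase,
      Finset.mem_union, SimpleGraph.mem_incidenceFinset, SimpleGraph.incidenceSet,
      Set.mem_sep_iff]
    constructor
    · rintro ⟨⟨a', ha'⟩, hadj, rfl⟩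
      obtain ⟨hne, w, hw1, hw2⟩ := SimpleGraph.lineGraph_adj_iff_exists.mp hadj.symm
      refine ⟨fun hh => hne (Subtype.ext hh), ?_⟩
      simp only [Sym2.mem_iff] at hw2 ⊢
      rcases hw2 with rfl | rfl
      · exact Or.inl ⟨ha', hw1⟩
      · exact Or.inr ⟨ha', hw1⟩
    · rintro ⟨hne, h | h⟩
      · exact ⟨⟨a, h.1⟩, SimpleGraph.lineGraph_adj_iff_exists.mpr
          ⟨fun hh => hne (congrArg Subtype.val hh.symm), u, by simp, h.2⟩, rfl⟩
      · exact ⟨⟨a, h.1⟩, SimpleGraph.lineGraph_adj_iff_exists.mpr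
          ⟨fun hh => hne (congrArg Subtype.val hh.symm), v, by simp, h.2⟩, rfl⟩
  rw [himg]
  have hinter : G.incidenceFinset u ∩ G.incidenceFinset v = {s(u,v)} := by
    ext a
    simp only [Finset.mem_inter, SimpleGraph.mem_incidenceFinset, Finset.mem_singleton]
    constructor
    · intro h
      exact G.incidenceSet_inter_incidenceSet_subset huv.ne ⟨h.1, h.2⟩
    · rintro rfl
      exact ⟨G.mk'_mem_incidenceSet_left_iff.mpr huv, G.mk'_mem_incidenceSet_right_iff.mpr huv⟩
  have hmem : s(u,v) ∈ G.incidenceFinset u ∪ G.incidenceFinset v := by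
    rw [Finset.mem_union, SimpleGraph.mem_incidenceFinset]
    exact Or.inl (G.mk'_mem_incidenceSet_left_iff.mpr huv)
  rw [Finset.card_erase_of_mem hmem]
  have hcard := Finset.card_union_add_card_inter (G.incidenceFinset u) (G.incidenceFinset v)
  rw [hinter, SimpleGraph.card_incidenceFinset_eq_degree,
    SimpleGraph.card_incidenceFinset_eq_degree, hcubic, hcubic, Finset.card_singleton] at hcard
  omega

/-- If the line graph of a cubic graph `G` has an in-out-proper orientation with all
absolute in-out-degrees at most 2, then `G` has a proper edge 3-coloring. -/

theorem stmt_19 [Fintype V] [DecidableEq V] (G : SimpleGraph V) [DecidableRel G.Adj]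
    (hcubic : ∀ v, G.degree v = 3)
    [DecidableRel G.lineGraph.Adj]
    (D : Orient G.lineGraph) (hD : IsIOProper G.lineGraph D)
    (hb : ∀ e, |ioDeg G.lineGraph D e| ≤ 2) :
    ∃ f : G.edgeSet → Fin 3, ∀ e e', G.lineGraph.Adj e e' → f e ≠ f e' := by
  classical
  have h4 : ∀ e : G.edgeSet, inDeg G.lineGraph D e + outDeg G.lineGraph D e = 4 :=
    fun e => (inDeg_add_outDeg G.lineGraph D e).trans (lineGraph_deg G hcubic e)
  have hio : ∀ e : G.edgeSet, ioDeg G.lineGraph D e = 2 * (inDeg G.lineGraph D e : ℤ) - 4 := by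
    intro e
    have := h4 e
    unfold ioDeg
    omega
  have hrange : ∀ e : G.edgeSet, 1 ≤ inDeg G.lineGraph D e ∧ inDeg G.lineGraph D e ≤ 3 := by
    intro e
    have hb' := hb e
    rw [hio e, abs_le] at hb'
    omega
  refine ⟨fun e => ⟨inDeg G.lineGraph D e - 1, by have := hrange e; omega⟩, ?_⟩
  intro e e' hadj h
  apply hD e e' hadj
  rw [hio e, hio e']
  have h1 := (hrange e).1
  have h2 := (hrange e').1
  have : inDeg G.lineGraph D e - 1 = inDeg G.lineGraph D e' - 1 := congrArg Fin.val h
  omega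
end
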